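/- For every integer n ≥ 1 and every real v > 0, the integral of exp(-v·(x_1 + ⋯ + x_n)) with respect to Lebesgue measure over the arbor polytope Q_{t_n} = {x ∈ ℝ^n : x_i ≥ 0 for all i, x_i ≤ 1 for 1 ≤ i ≤ n-1, x_1 + ⋯ + x_n ≤ n} equals (1 - e^{-v})^{n-1}/v^n - e^{-nv}/v. (This is the Laplace transform L_{t_n}(v) of the volume function of Q_{t_n}, i.e. L_{t_n}(E,V) = V^n(1-E)^{n-1} - V·E^n with E = e^{-v} and V = 1/v.) -/

import Mathlib

open MeasureTheory

/-- The arbor polytope `Q_{t_n} ⊆ ℝ^n`: points `x` with `x i ≥ 0` for all `i`,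
`x i ≤ 1` for the first `n - 1` coordinates, and `x 1 + ⋯ + x n ≤ n`. -/
def Qtn (n : ℕ) : Set (Fin n → ℝ) :=
  {x | (∀ i, 0 ≤ x i) ∧ (∀ i : Fin n, (i : ℕ) < n - 1 → x i ≤ 1) ∧ ∑ i, x i ≤ n}

lemma icc_exp (v : ℝ) (hv : 0 < v) (c : ℝ) (hc : 0 ≤ c) :
    ∫ t in Set.Icc (0:ℝ) c, Real.exp (-v * t) = (1 - Real.exp (-v * c)) / v := by
  rw [MeasureTheory.integral_Icc_eq_integral_Ioc, ← intervalIntegral.integral_of_le hc]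
  have : ∀ t ∈ Set.uIcc (0:ℝ) c, HasDerivAt (fun t => -Real.exp (-v * t) / v) (Real.exp (-v * t)) t := by
    intro t _
    have h := (((hasDerivAt_id t).const_mul (-v)).exp.const_mul (-1/v))
    have e1 : (fun t => -Real.exp (-v * t) / v) = fun y => -1 / v * Real.exp (-v * id y) := by
      ext s; simp only [id]; ring
    have e2 : Real.exp (-v * t) = -1 / v * (Real.exp (-v * id t) * (-v * 1)) := by
      simp only [id]; field_simp
    rw [e1, e2]; exact h
  rw [intervalIntegral.integral_eq_sub_of_hasDerivAt this
    (Continuous.intervalIntegrable (by continuity) 0 c)]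
  field_simp
  rw [mul_zero, neg_zero, Real.exp_zero]; ring

lemma cube_exp (v : ℝ) (hv : 0 < v) (m : ℕ) :
    ∫ y : Fin m → ℝ in Set.univ.pi (fun _ => Set.Icc (0:ℝ) 1),
      Real.exp (-v * ∑ i, y i) = ((1 - Real.exp (-v)) / v) ^ m := by
  have hmeas : MeasurableSet (Set.univ.pi (fun _ : Fin m => Set.Icc (0:ℝ) 1)) :=
    MeasurableSet.univ_pi fun _ => measurableSet_Icc
  rw [← integral_indicator hmeas]
  have heq : ∀ y : Fin m → ℝ,
      (Set.univ.pi (fun _ : Fin m => Set.Icc (0:ℝ) 1)).indicator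
        (fun y => Real.exp (-v * ∑ i, y i)) y
      = ∏ i, (Set.Icc (0:ℝ) 1).indicator (fun t => Real.exp (-v * t)) (y i) := by
    intro y
    by_cases hy : y ∈ Set.univ.pi (fun _ : Fin m => Set.Icc (0:ℝ) 1)
    · rw [Set.indicator_of_mem hy, Finset.mul_sum, Real.exp_sum]
      refine Finset.prod_congr rfl fun i _ => ?_
      rw [Set.indicator_of_mem (hy i (Set.mem_univ i))]
    · rw [Set.indicator_of_notMem hy]
      simp only [Set.mem_pi, Set.mem_univ, forall_true_left] at hy
      push_neg at hy
      obtain ⟨i, hi⟩ := hy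
      exact (Finset.prod_eq_zero (Finset.mem_univ i)
        (Set.indicator_of_notMem hi _)).symm
  simp_rw [heq]
  rw [MeasureTheory.volume_pi]
  rw [MeasureTheory.integral_fintype_prod_eq_pow (ι := Fin m)
    (f := (Set.Icc (0:ℝ) 1).indicator (fun t => Real.exp (-v * t)))]
  rw [integral_indicator measurableSet_Icc, icc_exp v hv 1 zero_le_one,
    Fintype.card_fin, mul_one]

/-- For every integer `n ≥ 1` and every real `v > 0`, the Laplace transform of the
volume function of `Q_{t_n}`, i.e. the integral of `exp(-v (x₁ + ⋯ + xₙ))` over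
`Q_{t_n}` with respect to Lebesgue measure, equals
`(1 - e^{-v})^{n-1}/vⁿ - e^{-nv}/v`. -/
theorem stmt12 (n : ℕ) (hn : 1 ≤ n) (v : ℝ) (hv : 0 < v) :
    ∫ x in Qtn n, Real.exp (-v * ∑ i, x i) =
      (1 - Real.exp (-v)) ^ (n - 1) / v ^ n - Real.exp (-(n * v)) / v := by
  obtain ⟨m, rfl⟩ : ∃ m, n = m + 1 := ⟨n - 1, (Nat.succ_pred_eq_of_pos hn).symm⟩
  clear hn
  set E := MeasurableEquiv.piFinSuccAbove (fun _ : Fin (m+1) => ℝ) (Fin.last m) with hE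
  set A : Set (Fin m → ℝ) := Set.univ.pi (fun _ => Set.Icc (0:ℝ) 1) with hA
  set g : (Fin m → ℝ) → ℝ := fun y => (m+1:ℝ) - ∑ i, y i with hg
  set T : Set (ℝ × (Fin m → ℝ)) := {p | (∀ i, p.2 i ∈ Set.Icc (0:ℝ) 1) ∧ p.1 ∈ Set.Icc 0 (g p.2)}
    with hT
  have hAmeas : MeasurableSet A := MeasurableSet.univ_pi fun _ => measurableSet_Icc
  have hAcomp : IsCompact A := isCompact_univ_pi fun _ => isCompact_Icc
  -- T is the preimage of Qtn (m+1)
  have hpre : E.symm ⁻¹' Qtn (m+1) = T := by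
    ext ⟨t, y⟩
    have hsymm : E.symm (t, y) = Fin.snoc y t := by
      simp [hE, MeasurableEquiv.piFinSuccAbove, Fin.snocEquiv]
    simp only [Set.mem_preimage, hsymm, Qtn, Set.mem_setOf_eq,
      Fin.forall_iff_succAbove (Fin.last m), Fin.succAbove_last, Fin.snoc_castSucc,
      Fin.snoc_last, Fin.sum_snoc, hT, Set.mem_Icc, hg]
    push_cast
    constructor
    · rintro ⟨⟨ht0, hy0⟩, hle, hsum⟩
      exact ⟨fun i => ⟨hy0 i, hle.2 i (by simpa using i.is_lt)⟩, ht0, by linarith⟩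
    · rintro ⟨hy, ht0, ht1⟩
      refine ⟨⟨ht0, fun i => (hy i).1⟩, ⟨by simp, fun i _ => (hy i).2⟩, by linarith⟩
  -- T is compact
  have hgcont : Continuous g := by fun_prop
  have hTclosed : IsClosed T := by
    have h1 : IsClosed {p : ℝ × (Fin m → ℝ) | ∀ i, p.2 i ∈ Set.Icc (0:ℝ) 1} := by
      have : {p : ℝ × (Fin m → ℝ) | ∀ i, p.2 i ∈ Set.Icc (0:ℝ) 1}
          = ⋂ i, (fun p : ℝ × (Fin m → ℝ) => p.2 i) ⁻¹' Set.Icc (0:ℝ) 1 := by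
        ext p; simp
      rw [this]
      exact isClosed_iInter fun i => isClosed_Icc.preimage (by fun_prop)
    have h2 : IsClosed {p : ℝ × (Fin m → ℝ) | 0 ≤ p.1} :=
      isClosed_le continuous_const continuous_fst
    have h3 : IsClosed {p : ℝ × (Fin m → ℝ) | p.1 ≤ g p.2} :=
      isClosed_le continuous_fst (hgcont.comp continuous_snd)
    have : T = {p : ℝ × (Fin m → ℝ) | ∀ i, p.2 i ∈ Set.Icc (0:ℝ) 1}
        ∩ ({p | 0 ≤ p.1} ∩ {p | p.1 ≤ g p.2}) := by
      ext p; simp [hT, Set.mem_Icc, and_assoc]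
    rw [this]
    exact h1.inter (h2.inter h3)
  have hTcomp : IsCompact T := by
    refine IsCompact.of_isClosed_subset (IsCompact.prod (isCompact_Icc
      (a := (0:ℝ)) (b := (m+1:ℝ))) hAcomp) hTclosed ?_
    rintro ⟨t, y⟩ ⟨hy, ht0, ht1⟩
    have hs : 0 ≤ ∑ i, y i := Finset.sum_nonneg fun i _ => (hy i).1
    refine ⟨⟨ht0, ?_⟩, fun i _ => hy i⟩
    simp only [hg] at ht1; linarith
  have hTmeas : MeasurableSet T := hTclosed.measurableSet
  -- the function
  set F : ℝ × (Fin m → ℝ) → ℝ := fun p => Real.exp (-v * (p.1 + ∑ i, p.2 i)) with hF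
  have hFcont : Continuous F := by fun_prop
  have hFint : Integrable (T.indicator F) := by
    rw [integrable_indicator_iff hTmeas]
    exact hFcont.continuousOn.integrableOn_compact hTcomp
  -- transfer the integral
  have hvp := (MeasureTheory.volume_preserving_piFinSuccAbove
    (fun _ : Fin (m+1) => ℝ) (Fin.last m)).symm
  have step1 : ∫ x in Qtn (m+1), Real.exp (-v * ∑ i, x i) = ∫ p in T, F p := by
    rw [← hvp.setIntegral_preimage_emb (MeasurableEquiv.measurableEmbedding _)
      (fun x => Real.exp (-v * ∑ i, x i)) (Qtn (m+1)), hpre]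
    refine setIntegral_congr_fun hTmeas fun p _ => ?_
    obtain ⟨t, y⟩ := p
    have hsymm : E.symm (t, y) = Fin.snoc y t := by
      simp [hE, MeasurableEquiv.piFinSuccAbove, Fin.snocEquiv]
    simp [hsymm, Fin.sum_snoc, hF, add_comm]
  rw [step1, ← integral_indicator hTmeas]
  rw [MeasureTheory.Measure.volume_eq_prod] at hFint ⊢
  rw [MeasureTheory.integral_prod_symm _ hFint]
  -- inner integral
  have inner : ∀ y : Fin m → ℝ, (∫ t : ℝ, T.indicator F (t, y))
      = A.indicator (fun y => (Real.exp (-v * ∑ i, y i) - Real.exp (-v * (m+1))) / v) y := by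
    intro y
    by_cases hy : y ∈ A
    · rw [Set.indicator_of_mem hy]
      have hyA : ∀ i, y i ∈ Set.Icc (0:ℝ) 1 := fun i => hy i (Set.mem_univ i)
      have hsum0 : 0 ≤ ∑ i, y i := Finset.sum_nonneg fun i _ => (hyA i).1
      have hsum1 : ∑ i, y i ≤ m := by
        calc ∑ i, y i ≤ ∑ _i : Fin m, (1:ℝ) := Finset.sum_le_sum fun i _ => (hyA i).2
        _ = m := by simp
      have hginner : ∀ t : ℝ, T.indicator F (t, y)
          = (Set.Icc 0 (g y)).indicator (fun t => Real.exp (-v * ∑ i, y i) * Real.exp (-v * t)) t := by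
        intro t
        by_cases ht : t ∈ Set.Icc 0 (g y)
        · rw [Set.indicator_of_mem ht, Set.indicator_of_mem (by exact ⟨hyA, ht⟩)]
          rw [hF, ← Real.exp_add]; ring_nf
        · rw [Set.indicator_of_notMem ht, Set.indicator_of_notMem]
          rintro ⟨-, ht'⟩; exact ht ht'
      simp_rw [hginner]
      rw [integral_indicator measurableSet_Icc, MeasureTheory.integral_const_mul,
        icc_exp v hv (g y) (by simp only [hg]; linarith)]
      rw [hg]
      have key : Real.exp (-v * ∑ i, y i) * (1 - Real.exp (-v * ((m+1:ℝ) - ∑ i, y i)))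
          = Real.exp (-v * ∑ i, y i) - Real.exp (-v * (m+1)) := by
        rw [mul_sub, mul_one, ← Real.exp_add]; ring_nf
      rw [← mul_div_assoc, key]
    · rw [Set.indicator_of_notMem hy]
      have : ∀ t : ℝ, T.indicator F (t, y) = 0 := by
        intro t
        refine Set.indicator_of_notMem ?_ _
        rintro ⟨hy', -⟩
        exact hy fun i _ => hy' i
      simp_rw [this, integral_zero]
  simp_rw [inner]
  rw [integral_indicator hAmeas]
  -- outer integral
  have hsub : ∫ y in A, (Real.exp (-v * ∑ i, y i) - Real.exp (-v * (m+1))) / v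
      = ((∫ y in A, Real.exp (-v * ∑ i, y i)) - Real.exp (-v * (m+1)) * (volume A).toReal) / v := by
    simp_rw [div_eq_mul_inv, sub_mul]
    rw [integral_sub]
    · rw [integral_const, MeasureTheory.integral_mul_const]
      simp [Measure.restrict_apply_univ]
      rw [measureReal_def]; ring
    · exact ((by fun_prop : Continuous fun y : Fin m → ℝ =>
        Real.exp (-v * ∑ i, y i) * v⁻¹).continuousOn.integrableOn_compact hAcomp)
    · exact integrableOn_const hAcomp.measure_lt_top.ne
  rw [hsub, cube_exp v hv m]
  have hvolA : (volume A : ENNReal) = 1 := by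
    rw [hA, volume_pi_pi]
    simp [Real.volume_Icc]
  rw [hvolA]
  simp only [ENNReal.toReal_one, mul_one]
  have hexp : Real.exp (-v * (m+1)) = Real.exp (-((m+1:ℕ) * v)) := by
    push_cast; ring_nf
  rw [hexp]
  rw [div_pow, Nat.add_sub_cancel]
  push_cast
  field_simp
  ring
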